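/- Let H be a real symmetric positive semidefinite d×d matrix with d ≥ 1. Then for every symmetric positive definite d×d matrix A with det(A) = 1, one has (det H)^{1/d} ≤ (1/d)·tr(A·H). -/

import Mathlib

open Matrix Finset
open scoped MatrixOrder

lemma trace_eq_sum_eigs {d : ℕ} {M : Matrix (Fin d) (Fin d) ℝ} (hM : M.IsHermitian) :
    M.trace = ∑ i, hM.eigenvalues i := by
  nth_rewrite 1 [hM.spectral_theorem]
  rw [Unitary.conjStarAlgAut_apply, Matrix.trace_mul_cycle,
    (Matrix.mem_unitaryGroup_iff').mp (hM.eigenvectorUnitary).2, Matrix.one_mul]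
  simp [Matrix.trace_diagonal]

lemma amgm_psd {d : ℕ} (hd : 1 ≤ d) {M : Matrix (Fin d) (Fin d) ℝ} (hM : M.PosSemidef) :
    M.det ^ ((1 : ℝ) / d) ≤ (1 / d : ℝ) * M.trace := by
  have hμ : ∀ i, 0 ≤ hM.isHermitian.eigenvalues i := hM.eigenvalues_nonneg
  have hdet : M.det = ∏ i, hM.isHermitian.eigenvalues i := by
    simpa using hM.isHermitian.det_eq_prod_eigenvalues
  have htr : M.trace = ∑ i, hM.isHermitian.eigenvalues i := trace_eq_sum_eigs hM.isHermitian
  rw [hdet, htr]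
  have h1 : (∏ i, hM.isHermitian.eigenvalues i) ^ ((1 : ℝ) / d)
      = ∏ i, (hM.isHermitian.eigenvalues i) ^ ((1 : ℝ) / d) := by
    rw [← Real.finset_prod_rpow _ _ (fun i _ => hμ i)]
  rw [h1, Finset.mul_sum]
  have := Real.geom_mean_le_arith_mean_weighted Finset.univ (fun _ => (1 : ℝ) / d)
    (fun i => hM.isHermitian.eigenvalues i)
    (fun i _ => by positivity)
    (by simp [Finset.card_univ]; field_simp)
    (fun i _ => hμ i)
  simpa using this

theorem stmt11 {d : ℕ} (hd : 1 ≤ d) (H A : Matrix (Fin d) (Fin d) ℝ)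
    (hH : H.PosSemidef) (hA : A.PosDef) (hdet : A.det = 1) :
    H.det ^ ((1 : ℝ) / d) ≤ (1 / d : ℝ) * (A * H).trace := by
  set B := CFC.sqrt A with hB
  have hBH : B.IsHermitian := (CFC.sqrt_nonneg A).posSemidef.isHermitian
  have hM : (B * H * B).PosSemidef := by
    have := hH.conjTranspose_mul_mul_same B
    rwa [hBH.eq] at this
  have hBB : B * B = A := CFC.sqrt_mul_sqrt_self A hA.posSemidef.nonneg
  have hdetM : (B * H * B).det = H.det := by
    rw [Matrix.det_mul, Matrix.det_mul, mul_comm B.det, mul_assoc, ← Matrix.det_mul, hBB, hdet,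
      mul_one]
  have htrM : (B * H * B).trace = (A * H).trace := by
    rw [Matrix.trace_mul_cycle, hBB]
  have := amgm_psd hd hM
  rwa [hdetM, htrM] at this
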